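/- For every n ≥ 2, the set V(S_n) := ⋃_{x̄ ∈ S_n↑} V(x̄), where for x̄ ∈ ℤⁿ the set V(x̄) consists of x̄ itself together with, for each k ∈ {1,…,n−1}, the point (x̄₁, …, x̄_{k−1}, x̄_k + 1, 0, …, 0), has cardinality |V(S_n)| = 2ⁿ + 2^{n−1} − 2. -/

import Mathlib

/-- `x` is an integer point. -/
def isInt {n : ℕ} (x : Fin n → ℝ) : Prop := ∀ i, ∃ z : ℤ, x i = (z : ℝ)

/-- `w = x↑` for `x ∈ K = ℝⁿ₊`: if `x ∈ ℤⁿ` then `w = x`; otherwise, with `k` the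
smallest index such that `x_k ∉ ℤ`, `wᵢ = xᵢ` for `i < k`, `w_k = ⌈x_k⌉`, and `wᵢ = 0`
for `i > k`. -/
def stdUp {n : ℕ} (x w : Fin n → ℝ) : Prop :=
  (isInt x ∧ w = x) ∨
  ∃ k : Fin n, (¬ ∃ z : ℤ, x k = (z : ℝ)) ∧
    (∀ j : Fin n, j < k → ∃ z : ℤ, x j = (z : ℝ)) ∧
    (∀ i : Fin n, i < k → w i = x i) ∧ w k = (⌈x k⌉ : ℝ) ∧
    (∀ i : Fin n, k < i → w i = 0)

/-- `S_n = {x ∈ [0,1]ⁿ : ‖x - 𝟙/2‖² ≤ n/4 - 3/16}`. -/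
def Sn (n : ℕ) : Set (Fin n → ℝ) :=
  {x | (∀ i, x i ∈ Set.Icc (0 : ℝ) 1) ∧
    ∑ i, (x i - 1/2) ^ 2 ≤ (n : ℝ)/4 - 3/16}

/-- `S_n↑ = {x↑ : x ∈ S_n}`. -/
def SnUp (n : ℕ) : Set (Fin n → ℝ) := {w | ∃ x ∈ Sn n, stdUp x w}

/-- `V(x̄)` consists of `x̄` together with, for each `k ∈ {1,…,n-1}`, the point
`(x̄₁, …, x̄_{k-1}, x̄_k + 1, 0, …, 0)`. -/
def Vpt {n : ℕ} (xb : Fin n → ℝ) : Set (Fin n → ℝ) :=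
  insert xb {w | ∃ k : Fin n, (k : ℕ) + 1 < n ∧
    w = fun i => if i < k then xb i else if i = k then xb k + 1 else 0}

/-- `V(S_n) = ⋃_{x̄ ∈ S_n↑} V(x̄)`. -/
def VS (n : ℕ) : Set (Fin n → ℝ) := ⋃ xb ∈ SnUp n, Vpt xb

lemma snUp_eq (n : ℕ) :
    SnUp n = {w : Fin n → ℝ | (∀ i, w i = 0 ∨ w i = 1) ∧ w ≠ 0} := by
  ext w
  constructor
  · rintro ⟨x, ⟨hbox, hsum⟩, hstd⟩
    rcases hstd with ⟨hint, hwx⟩ | ⟨k, hk, hjint, hlt, hkc, hgt⟩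
    · exfalso
      have hterm : ∀ i, (x i - 1/2) ^ 2 = 1/4 := by
        intro i
        obtain ⟨z, hz⟩ := hint i
        obtain ⟨h0, h1⟩ := hbox i
        rw [hz] at h0 h1 ⊢
        have hz0 : (0:ℤ) ≤ z := by exact_mod_cast h0
        have hz1 : z ≤ 1 := by exact_mod_cast h1
        interval_cases z <;> norm_num
      rw [Finset.sum_congr rfl (fun i _ => hterm i)] at hsum
      simp [Finset.sum_const, Finset.card_univ] at hsum
      nlinarith [hsum]
    · have hxk01 : 0 < x k ∧ x k < 1 := by
        obtain ⟨h0, h1⟩ := hbox k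
        constructor
        · rcases h0.lt_or_eq with h | h
          · exact h
          · exact absurd (⟨0, by exact_mod_cast h.symm⟩ : ∃ z : ℤ, x k = (z:ℝ)) hk
        · rcases h1.lt_or_eq with h | h
          · exact h
          · exact absurd (⟨1, by exact_mod_cast h⟩ : ∃ z : ℤ, x k = (z:ℝ)) hk
      have hceil : ⌈x k⌉ = 1 := by
        rw [Int.ceil_eq_iff]; constructor
        · push_cast; linarith [hxk01.1]
        · push_cast; linarith [hxk01.2]
      constructor
      · intro i
        rcases lt_trichotomy i k with h | rfl | h
        · rw [hlt i h]
          obtain ⟨z, hz⟩ := hjint i h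
          obtain ⟨h0, h1⟩ := hbox i
          rw [hz] at h0 h1 ⊢
          have hz0 : (0:ℤ) ≤ z := by exact_mod_cast h0
          have hz1 : z ≤ 1 := by exact_mod_cast h1
          interval_cases z <;> simp
        · right; rw [hkc, hceil]; norm_num
        · left; exact hgt i h
      · intro h0
        have : w k = 1 := by rw [hkc, hceil]; norm_num
        rw [h0] at this; simp at this
  · rintro ⟨h01, hne⟩
    have hs : (Finset.univ.filter fun i => w i ≠ 0).Nonempty := by
      by_contra h
      apply hne
      funext i
      rw [Finset.not_nonempty_iff_eq_empty, Finset.filter_eq_empty_iff] at h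
      have := h (Finset.mem_univ i)
      simpa using this
    set k := (Finset.univ.filter fun i => w i ≠ 0).max' hs with hkdef
    have hkmem : w k ≠ 0 := by
      have := (Finset.univ.filter fun i => w i ≠ 0).max'_mem hs
      simpa using this
    have hwk : w k = 1 := (h01 k).resolve_left hkmem
    have hafter : ∀ i, k < i → w i = 0 := by
      intro i hi
      by_contra h
      have : i ≤ k := Finset.le_max' _ i (by simp [h])
      exact absurd hi (not_lt.mpr this)
    refine ⟨fun i => if i < k then w i else 1/2, ⟨?_, ?_⟩, ?_⟩
    · intro i
      dsimp only
      by_cases h : i < k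
      · rw [if_pos h]; rcases h01 i with h' | h' <;> rw [h'] <;> norm_num
      · rw [if_neg h]; norm_num
    · have hterm : ∀ i : Fin n, ((if i < k then w i else 1/2) - 1/2)^2 ≤ if i = k then 0 else 1/4 := by
        intro i
        by_cases he : i = k
        · subst he; norm_num
        · rw [if_neg he]
          by_cases h : i < k
          · rw [if_pos h]; rcases h01 i with h' | h' <;> rw [h'] <;> norm_num
          · rw [if_neg h]; norm_num
      dsimp only
      calc ∑ i, ((if i < k then w i else 1/2) - 1/2)^2
          ≤ ∑ i : Fin n, if i = k then (0:ℝ) else 1/4 := Finset.sum_le_sum fun i _ => hterm i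
        _ = ((Finset.univ.erase k).card : ℝ) * (1/4) := by
            rw [Finset.sum_ite, Finset.sum_const, Finset.sum_const, Finset.filter_ne']
            simp
        _ = ((n:ℝ) - 1) * (1/4) := by
            rw [Finset.card_erase_of_mem (Finset.mem_univ k), Finset.card_univ, Fintype.card_fin]
            have hn1 : 1 ≤ n := k.pos
            push_cast [Nat.cast_sub hn1]
            ring_nf
        _ ≤ (n:ℝ)/4 - 3/16 := by
            have : (1:ℝ) ≤ n := by exact_mod_cast k.pos
            linarith
    · right
      refine ⟨k, ?_, ?_, ?_, ?_, ?_⟩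
      · dsimp only
        rw [if_neg (lt_irrefl k)]
        rintro ⟨z, hz⟩
        have h2 : (2:ℝ) * z = 1 := by linarith
        have : (2:ℤ) * z = 1 := by exact_mod_cast h2
        omega
      · intro j hj
        dsimp only
        rw [if_pos hj]
        rcases h01 j with h' | h'
        · exact ⟨0, by rw [h']; norm_num⟩
        · exact ⟨1, by rw [h']; norm_num⟩
      · intro i hi; dsimp only; rw [if_pos hi]
      · dsimp only
        rw [if_neg (lt_irrefl k), hwk]
        have : ⌈(1/2:ℝ)⌉ = 1 := by
          rw [Int.ceil_eq_iff] <;> norm_num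
        rw [this]; norm_num
      · exact hafter

lemma two_pow_sum (m : ℕ) : ∑ i ∈ Finset.range m, 2^i = 2^m - 1 := by
  induction m with
  | zero => simp
  | succ m ih => rw [Finset.sum_range_succ, ih]; have := Nat.one_le_two_pow (n := m); omega

noncomputable section
variable (n : ℕ)

def Bset : Set (Fin n → ℝ) := {w | (∀ i, w i = 0 ∨ w i = 1) ∧ w ≠ 0}

def Cset : Set (Fin n → ℝ) :=
  {w | ∃ k : Fin n, (k:ℕ) + 1 < n ∧ (∀ i, i < k → (w i = 0 ∨ w i = 1)) ∧
    w k = 2 ∧ ∀ i, k < i → w i = 0}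

def Fb : (Fin n → Bool) → (Fin n → ℝ) := fun b i => if b i then 1 else 0

def Gb : ((k : Fin (n-1)) × (Fin (k:ℕ) → Bool)) → (Fin n → ℝ) :=
  fun s i => if h : (i:ℕ) < (s.1:ℕ) then (if s.2 ⟨i, h⟩ then 1 else 0)
    else if (i:ℕ) = (s.1:ℕ) then 2 else 0

lemma Fb_inj : Function.Injective (Fb n) := by
  intro b b' h
  funext i
  have := congrFun h i
  unfold Fb at this
  cases hb : b i <;> cases hb' : b' i <;> rw [hb, hb'] at this <;> simp_all

lemma Bset_eq : Bset n = Fb n '' {b | b ≠ fun _ => false} := by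
  ext w
  constructor
  · rintro ⟨h01, hne⟩
    refine ⟨fun i => decide (w i = 1), ?_, ?_⟩
    · intro hb
      apply hne
      funext i
      have := congrFun hb i
      simp at this
      rcases h01 i with h | h
      · exact h
      · exact absurd h this
    · funext i
      unfold Fb
      rcases h01 i with h | h <;> simp [h]
  · rintro ⟨b, hb, rfl⟩
    constructor
    · intro i; unfold Fb; by_cases h : b i <;> simp [h]
    · intro h0
      apply hb
      funext i
      have := congrFun h0 i
      unfold Fb at this
      by_cases h : b i <;> simp_all

lemma Gb_inj : Function.Injective (Gb n) := by
  rintro ⟨k, p⟩ ⟨k', p'⟩ h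
  have hkn : (k:ℕ) < n := by omega
  have hk'n : (k':ℕ) < n := by omega
  have hkk : (k:ℕ) = (k':ℕ) := by
    by_contra hne
    rcases Nat.lt_or_ge (k:ℕ) (k':ℕ) with hlt | hge
    · have := congrFun h ⟨k, hkn⟩
      simp only [Gb] at this
      norm_num at this
      split_ifs at this <;> simp_all
    · have hlt : (k':ℕ) < (k:ℕ) := lt_of_le_of_ne hge (fun e => hne e.symm)
      have := congrFun h ⟨k', hk'n⟩
      simp only [Gb] at this
      norm_num at this
      split_ifs at this <;> simp_all
  have hk : k = k' := Fin.ext hkk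
  subst hk
  congr 1
  funext j
  have hj : (j:ℕ) < n := lt_trans j.isLt hkn
  have := congrFun h ⟨j, hj⟩
  simp only [Gb, Fin.eta] at this
  cases hb : p j <;> cases hb' : p' j <;> simp [hb, hb'] at this ⊢ <;> norm_num at this

lemma Cset_eq : Cset n = Set.range (Gb n) := by
  ext w
  constructor
  · rintro ⟨k, hk, hpre, h2, hpost⟩
    refine ⟨⟨⟨k, by omega⟩, fun j => decide (w ⟨j, by omega⟩ = 1)⟩, ?_⟩
    funext i
    simp only [Gb]
    by_cases h1 : (i:ℕ) < (k:ℕ)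
    · rw [dif_pos h1]
      simp only [Fin.eta]
      have hik : i < k := by rw [Fin.lt_def]; exact h1
      rcases hpre i hik with h | h <;> simp [h]
    · rw [dif_neg h1]
      by_cases he : (i:ℕ) = (k:ℕ)
      · rw [if_pos he]
        have : i = k := Fin.ext he
        rw [this, h2]
      · rw [if_neg he]
        refine (hpost i ?_).symm
        rw [Fin.lt_def]
        omega
  · rintro ⟨⟨k, p⟩, rfl⟩
    have hkn : (k:ℕ) + 1 < n := by have := k.isLt; omega
    refine ⟨⟨k, by omega⟩, by simpa using hkn, ?_, ?_, ?_⟩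
    · intro i hi
      simp only [Fin.lt_def, Fin.val_mk] at hi
      simp only [Gb]
      rw [dif_pos hi]
      by_cases h : p ⟨i, hi⟩ <;> simp [h]
    · simp only [Gb]
      simp
    · intro i hi
      simp only [Fin.lt_def, Fin.val_mk] at hi
      simp only [Gb]
      rw [dif_neg (by omega), if_neg (by omega)]

lemma Bset_ncard (hn : 2 ≤ n) : (Bset n).ncard = 2^n - 1 := by
  rw [Bset_eq, Set.ncard_image_of_injective _ (Fb_inj n)]
  have : {b : Fin n → Bool | b ≠ fun _ => false} = {(fun _ => false : Fin n → Bool)}ᶜ := by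
    ext b; simp [Set.mem_compl_iff]
  rw [this]
  rw [Set.ncard_eq_toFinset_card']
  simp [Finset.card_compl]

lemma Cset_ncard (hn : 2 ≤ n) : (Cset n).ncard = 2^(n-1) - 1 := by
  rw [Cset_eq, Set.ncard_eq_toFinset_card']
  rw [Set.toFinset_range, Finset.card_image_of_injective _ (Gb_inj n)]
  rw [Finset.card_univ, Fintype.card_sigma]
  have : ∑ k : Fin (n-1), Fintype.card (Fin (k:ℕ) → Bool) = ∑ k : Fin (n-1), 2^(k:ℕ) := by
    apply Finset.sum_congr rfl
    intro k _
    simp [Fintype.card_fun]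
  rw [this, Fin.sum_univ_eq_sum_range (fun i => 2^i), two_pow_sum]

lemma BC_disjoint : Disjoint (Bset n) (Cset n) := by
  rw [Set.disjoint_left]
  rintro w ⟨h01, -⟩ ⟨k, -, -, h2, -⟩
  rcases h01 k with h | h <;> rw [h] at h2 <;> norm_num at h2

lemma Bset_finite : (Bset n).Finite := by
  rw [Bset_eq]; exact (Set.toFinite _).image _

lemma Cset_finite : (Cset n).Finite := by
  rw [Cset_eq]; exact Set.finite_range _

lemma VS_eq (n : ℕ) : VS n = Bset n ∪ Cset n := by
  ext w
  simp only [VS, Set.mem_iUnion]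
  constructor
  · rintro ⟨xb, hxb, hw⟩
    rw [snUp_eq] at hxb
    obtain ⟨h01, hne⟩ := hxb
    rcases hw with rfl | ⟨k, hk, rfl⟩
    · exact Or.inl ⟨h01, hne⟩
    · rcases h01 k with h0 | h0
      · left
        constructor
        · intro i
          dsimp only
          by_cases h1 : i < k
          · rw [if_pos h1]; exact h01 i
          · rw [if_neg h1]
            by_cases h2 : i = k
            · rw [if_pos h2, h0]; right; norm_num
            · rw [if_neg h2]; left; rfl
        · intro hz
          have := congrFun hz k
          try dsimp only at this
          rw [if_neg (lt_irrefl k), if_pos rfl, h0] at this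
          norm_num at this
      · right
        refine ⟨k, hk, ?_, ?_, ?_⟩
        · intro i hi
          try dsimp only
          rw [if_pos hi]
          exact h01 i
        · dsimp only
          rw [if_neg (lt_irrefl k), if_pos rfl, h0]
          norm_num
        · intro i hi
          try dsimp only
          rw [if_neg (not_lt_of_gt hi), if_neg (ne_of_gt hi)]
  · rintro (⟨h01, hne⟩ | ⟨k, hk, hpre, h2, hpost⟩)
    · exact ⟨w, by rw [snUp_eq]; exact ⟨h01, hne⟩, Set.mem_insert _ _⟩
    · refine ⟨fun i => if i = k then (1:ℝ) else if i < k then w i else 0, ?_, ?_⟩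
      · rw [snUp_eq]
        constructor
        · intro i
          try dsimp only
          by_cases h1 : i = k
          · rw [if_pos h1]; right; rfl
          · rw [if_neg h1]
            by_cases h2 : i < k
            · rw [if_pos h2]; exact hpre i h2
            · rw [if_neg h2]; left; rfl
        · intro hz
          have := congrFun hz k
          try dsimp only at this
          rw [if_pos rfl] at this
          norm_num at this
      · right
        refine ⟨k, hk, ?_⟩
        funext i
        dsimp only
        by_cases h1 : i < k
        · rw [if_pos h1, if_neg (ne_of_lt h1), if_pos h1]
        · rw [if_neg h1]
          by_cases he : i = k
          · rw [if_pos he, if_pos rfl, he, h2]; norm_num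
          · rw [if_neg he]
            exact hpost i (lt_of_le_of_ne (not_lt.mp h1) (Ne.symm he))

/-- For every `n ≥ 2`, `|V(S_n)| = 2ⁿ + 2^{n-1} - 2`. -/
theorem stmt19 (n : ℕ) (hn : 2 ≤ n) :
    (VS n).ncard = 2 ^ n + 2 ^ (n - 1) - 2 := by
  rw [VS_eq, Set.ncard_union_eq (BC_disjoint n) (Bset_finite n) (Cset_finite n),
    Bset_ncard n hn, Cset_ncard n hn]
  have h1 : 1 ≤ 2^n := Nat.one_le_two_pow
  have h2 : 1 ≤ 2^(n-1) := Nat.one_le_two_pow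
  omega
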